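/- Let g = 2 and let B be the positive definite symmetric bilinear form on ℝ² with matrix r₁·[[1,0],[0,1]] + r₂·[[0,0],[0,1]] + r₃·[[1,−1],[−1,1]], where r₁, r₂, r₃ > 0. Then the 2-dimensional Delaunay cells of B are exactly the ℤ²-translates of the two triangles σ₁ = conv{0, s₁, s₁+s₂} and σ₂ = conv{0, s₂, s₁+s₂}. -/

import Mathlib

open Matrix Set

noncomputable section

/-- The standard lattice `ℤ^g` sitting inside `ℝ^g`. -/
def latticePts (g : ℕ) : Set (Fin g → ℝ) :=
  Set.range (fun a : Fin g → ℤ => fun i => (a i : ℝ))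

/-- `σ` is a (closed) Delaunay cell of the bilinear form `B`: there is an `α ∈ ℝ^g`
such that `σ` is the convex hull of the lattice points nearest to `α`
(with respect to the distance defined by `B`). -/
def IsDelaunayCell {g : ℕ} (B : (Fin g → ℝ) → (Fin g → ℝ) → ℝ)
    (σ : Set (Fin g → ℝ)) : Prop :=
  ∃ α : Fin g → ℝ, σ = convexHull ℝ
    {a | a ∈ latticePts g ∧ ∀ b ∈ latticePts g, B (a - α) (a - α) ≤ B (b - α) (b - α)}

/-- `C(0,S)`: the cone generated by `S` over the nonnegative reals. -/
def cone0 {g : ℕ} (S : Set (Fin g → ℝ)) : Set (Fin g → ℝ) :=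
  {x | ∃ r : ℝ, 0 ≤ r ∧ ∃ y ∈ convexHull ℝ S, x = r • y}

/-- `Semi(0, S ∩ ℤ^g)`: the additive submonoid generated by the lattice points of `S`. -/
def semi0 {g : ℕ} (S : Set (Fin g → ℝ)) : Set (Fin g → ℝ) :=
  (AddSubmonoid.closure (S ∩ latticePts g) : AddSubmonoid (Fin g → ℝ))

/-- The standard basis vector `s_i` of `ℝ^g`. -/
def stdV (g : ℕ) (i : Fin g) : Fin g → ℝ := Pi.single i 1

/-- Translation of a subset of `ℝ^g` by a lattice vector `v ∈ ℤ^g`. -/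
def zTrans {g : ℕ} (v : Fin g → ℤ) (S : Set (Fin g → ℝ)) : Set (Fin g → ℝ) :=
  (fun x => (fun i => (v i : ℝ)) + x) '' S

/-! ### Auxiliary definitions and lemmas -/

/-- The quadratic form in coordinates. -/
def Qr (r₁ r₂ r₃ x y : ℝ) : ℝ := r₁*(x^2+y^2) + r₂*y^2 + r₃*(x-y)^2

/-- The potential function. -/
def Ff (r₁ r₂ r₃ u v x y : ℝ) : ℝ := Qr r₁ r₂ r₃ x y - 2*x*u - 2*y*v

/-- cast of an integer vector -/
def cv (w : Fin 2 → ℤ) : Fin 2 → ℝ := fun i => (w i : ℝ)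

lemma cv_mem (w : Fin 2 → ℤ) : cv w ∈ latticePts 2 := ⟨w, rfl⟩

lemma lattice_iff {a : Fin 2 → ℝ} : a ∈ latticePts 2 ↔ ∃ w : Fin 2 → ℤ, a = cv w := by
  constructor
  · rintro ⟨w, rfl⟩; exact ⟨w, rfl⟩
  · rintro ⟨w, rfl⟩; exact ⟨w, rfl⟩

lemma bmat_apply (r₁ r₂ r₃ : ℝ) (x y : Fin 2 → ℝ) :
    x ⬝ᵥ ((r₁ • !![(1:ℝ), 0; 0, 1] + r₂ • !![(0:ℝ), 0; 0, 1]
      + r₃ • !![(1:ℝ), -1; -1, 1]).mulVec y)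
    = r₁*(x 0*y 0 + x 1*y 1) + r₂*(x 1*y 1) + r₃*((x 0 - x 1)*(y 0 - y 1)) := by
  simp [Matrix.mulVec, dotProduct, Fin.sum_univ_two, Matrix.add_apply, Matrix.smul_apply]
  ring

lemma bmat_diag (r₁ r₂ r₃ : ℝ) (x : Fin 2 → ℝ) :
    x ⬝ᵥ ((r₁ • !![(1:ℝ), 0; 0, 1] + r₂ • !![(0:ℝ), 0; 0, 1]
      + r₃ • !![(1:ℝ), -1; -1, 1]).mulVec x) = Qr r₁ r₂ r₃ (x 0) (x 1) := by
  rw [bmat_apply]; simp only [Qr]; ring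

/-- The fundamental difference identity.  Here
`u = B(e₁, α - p)` and `v = B(e₂, α - p)`. -/
lemma key_diff (r₁ r₂ r₃ : ℝ) (α p b : Fin 2 → ℝ) (m n : ℝ)
    (hb0 : b 0 = p 0 + m) (hb1 : b 1 = p 1 + n) :
    Qr r₁ r₂ r₃ (b 0 - α 0) (b 1 - α 1) - Qr r₁ r₂ r₃ (p 0 - α 0) (p 1 - α 1)
    = Ff r₁ r₂ r₃ ((r₁+r₃)*(α 0 - p 0) + (-r₃)*(α 1 - p 1))
        ((-r₃)*(α 0 - p 0) + (r₁+r₂+r₃)*(α 1 - p 1)) m n := by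
  simp only [Ff, Qr]; rw [hb0, hb1]; ring
lemma int_mul_succ (k : ℤ) : 0 ≤ k*(k+1) := by
  rcases le_or_gt 0 k with h | h
  · exact mul_nonneg h (by omega)
  · have := mul_nonneg (by omega : (0:ℤ) ≤ -k) (by omega : (0:ℤ) ≤ -(k+1))
    nlinarith

lemma int_mul_pred (k : ℤ) : 0 ≤ k*(k-1) := by
  have := int_mul_succ (k-1); nlinarith

lemma odd_sq_ge (k : ℤ) : 1 ≤ (2*k+1)^2 := by nlinarith [int_mul_succ k]

lemma odd_sq_le (p : ℤ) (h : (2*p+1)^2 ≤ 1) : p = 0 ∨ p = -1 := by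
  have h1 : p*(p+1) ≤ 0 := by nlinarith
  have : p*(p+1) = 0 := le_antisymm h1 (int_mul_succ p)
  rcases mul_eq_zero.mp this with h | h
  · exact Or.inl h
  · right; omega

lemma sq_zero_real (x : ℝ) (h : x^2 ≤ 0) : x = 0 := by nlinarith [sq_nonneg x]

lemma cancel_pos (c x : ℝ) (hc : 0 < c) (h : c * x ≤ c * 0) : x ≤ 0 :=
  (mul_le_mul_iff_right₀ hc).mp h

lemma diff_eq (r₁ r₂ r₃ u v γ₀ γ₁ : ℝ)
    (hγ₀ : (r₁+r₃)*γ₀ + (-r₃)*γ₁ = u) (hγ₁ : (-r₃)*γ₀ + (r₁+r₂+r₃)*γ₁ = v)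
    (m n : ℝ) :
    Qr r₁ r₂ r₃ (m-γ₀) (n-γ₁) - Qr r₁ r₂ r₃ (-γ₀) (-γ₁) = Ff r₁ r₂ r₃ u v m n := by
  simp only [Qr, Ff]
  linear_combination (-2*m)*hγ₀ + (-2*n)*hγ₁

/-- solving for the circumcenter offset -/
lemma exists_gamma (r₁ r₂ r₃ : ℝ) (h₁ : 0 < r₁) (h₂ : 0 < r₂) (h₃ : 0 < r₃) (u v : ℝ) :
    ∃ γ₀ γ₁ : ℝ, (r₁+r₃)*γ₀ + (-r₃)*γ₁ = u ∧ (-r₃)*γ₀ + (r₁+r₂+r₃)*γ₁ = v := by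
  set D : ℝ := (r₁+r₃)*(r₁+r₂+r₃) - r₃^2 with hD
  have hDpos : 0 < D := by rw [hD]; nlinarith
  refine ⟨((r₁+r₂+r₃)*u + r₃*v)/D, (r₃*u + (r₁+r₃)*v)/D, ?_, ?_⟩ <;>
    field_simp <;> ring

/-- values of the σ₁ potential -/
lemma rev1_eq (r₁ r₂ r₃ : ℝ) (m n : ℤ) :
    Ff r₁ r₂ r₃ ((r₁+r₃)/2) (-r₃+(r₁+r₂+r₃)/2) (m:ℝ) (n:ℝ)
    = r₁*((m:ℝ)*((m:ℝ)-1)+(n:ℝ)*((n:ℝ)-1)) + r₂*((n:ℝ)*((n:ℝ)-1))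
      + r₃*(((m:ℝ)-(n:ℝ))*((m:ℝ)-(n:ℝ)-1)) := by
  simp only [Ff, Qr]; ring

lemma rev2_eq (r₁ r₂ r₃ : ℝ) (m n : ℤ) :
    Ff r₁ r₂ r₃ (-r₃+(r₁+r₃)/2) ((r₁+r₂+r₃)/2) (m:ℝ) (n:ℝ)
    = r₁*((m:ℝ)*((m:ℝ)-1)+(n:ℝ)*((n:ℝ)-1)) + r₂*((n:ℝ)*((n:ℝ)-1))
      + r₃*(((m:ℝ)-(n:ℝ))*((m:ℝ)-(n:ℝ)+1)) := by
  simp only [Ff, Qr]; ring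

lemma rev1_nonneg (r₁ r₂ r₃ : ℝ) (h₁ : 0 < r₁) (h₂ : 0 < r₂) (h₃ : 0 < r₃) (m n : ℤ) :
    0 ≤ Ff r₁ r₂ r₃ ((r₁+r₃)/2) (-r₃+(r₁+r₂+r₃)/2) (m:ℝ) (n:ℝ) := by
  rw [rev1_eq]
  have a1 : (0:ℝ) ≤ (m:ℝ)*((m:ℝ)-1) := by exact_mod_cast int_mul_pred m
  have a2 : (0:ℝ) ≤ (n:ℝ)*((n:ℝ)-1) := by exact_mod_cast int_mul_pred n
  have a3 : (0:ℝ) ≤ ((m:ℝ)-(n:ℝ))*(((m:ℝ)-(n:ℝ))-1) := by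
    exact_mod_cast int_mul_pred (m-n)
  have := mul_nonneg h₁.le (by linarith : (0:ℝ) ≤ (m:ℝ)*((m:ℝ)-1)+(n:ℝ)*((n:ℝ)-1))
  have := mul_nonneg h₂.le a2
  have := mul_nonneg h₃.le a3
  nlinarith [a3]

lemma rev2_nonneg (r₁ r₂ r₃ : ℝ) (h₁ : 0 < r₁) (h₂ : 0 < r₂) (h₃ : 0 < r₃) (m n : ℤ) :
    0 ≤ Ff r₁ r₂ r₃ (-r₃+(r₁+r₃)/2) ((r₁+r₂+r₃)/2) (m:ℝ) (n:ℝ) := by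
  rw [rev2_eq]
  have a1 : (0:ℝ) ≤ (m:ℝ)*((m:ℝ)-1) := by exact_mod_cast int_mul_pred m
  have a2 : (0:ℝ) ≤ (n:ℝ)*((n:ℝ)-1) := by exact_mod_cast int_mul_pred n
  have a3 : (0:ℝ) ≤ ((m:ℝ)-(n:ℝ))*(((m:ℝ)-(n:ℝ))+1) := by
    exact_mod_cast int_mul_succ (m-n)
  have := mul_nonneg h₁.le (by linarith : (0:ℝ) ≤ (m:ℝ)*((m:ℝ)-1)+(n:ℝ)*((n:ℝ)-1))
  have := mul_nonneg h₂.le a2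
  have := mul_nonneg h₃.le a3
  linarith

lemma rev1_zero_iff (r₁ r₂ r₃ : ℝ) (h₁ : 0 < r₁) (h₂ : 0 < r₂) (h₃ : 0 < r₃) (m n : ℤ)
    (h : Ff r₁ r₂ r₃ ((r₁+r₃)/2) (-r₃+(r₁+r₂+r₃)/2) (m:ℝ) (n:ℝ) = 0) :
    (m = 0 ∧ n = 0) ∨ (m = 1 ∧ n = 0) ∨ (m = 1 ∧ n = 1) := by
  rw [rev1_eq] at h
  have a1 : (0:ℝ) ≤ (m:ℝ)*((m:ℝ)-1) := by exact_mod_cast int_mul_pred m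
  have a2 : (0:ℝ) ≤ (n:ℝ)*((n:ℝ)-1) := by exact_mod_cast int_mul_pred n
  have a3 : (0:ℝ) ≤ ((m:ℝ)-(n:ℝ))*(((m:ℝ)-(n:ℝ))-1) := by
    exact_mod_cast int_mul_pred (m-n)
  have b1 : (m:ℝ)*((m:ℝ)-1) = 0 := by nlinarith [mul_nonneg h₂.le a2, mul_nonneg h₃.le a3, mul_nonneg h₁.le a2, mul_nonneg h₁.le a1]
  have b2 : (n:ℝ)*((n:ℝ)-1) = 0 := by nlinarith [mul_nonneg h₂.le a2, mul_nonneg h₃.le a3, mul_nonneg h₁.le a2, mul_nonneg h₁.le a1]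
  have b3 : ((m:ℝ)-(n:ℝ))*(((m:ℝ)-(n:ℝ))-1) = 0 := by nlinarith [mul_nonneg h₂.le a2, mul_nonneg h₃.le a3, mul_nonneg h₁.le a2, mul_nonneg h₁.le a1]
  have c1 : m*(m-1) = 0 := by exact_mod_cast b1
  have c2 : n*(n-1) = 0 := by exact_mod_cast b2
  have c3 : (m-n)*((m-n)-1) = 0 := by exact_mod_cast b3
  rcases mul_eq_zero.mp c1 with h|h <;> rcases mul_eq_zero.mp c2 with h'|h' <;>
    rcases mul_eq_zero.mp c3 with h''|h'' <;> omega

lemma rev2_zero_iff (r₁ r₂ r₃ : ℝ) (h₁ : 0 < r₁) (h₂ : 0 < r₂) (h₃ : 0 < r₃) (m n : ℤ)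
    (h : Ff r₁ r₂ r₃ (-r₃+(r₁+r₃)/2) ((r₁+r₂+r₃)/2) (m:ℝ) (n:ℝ) = 0) :
    (m = 0 ∧ n = 0) ∨ (m = 0 ∧ n = 1) ∨ (m = 1 ∧ n = 1) := by
  rw [rev2_eq] at h
  have a1 : (0:ℝ) ≤ (m:ℝ)*((m:ℝ)-1) := by exact_mod_cast int_mul_pred m
  have a2 : (0:ℝ) ≤ (n:ℝ)*((n:ℝ)-1) := by exact_mod_cast int_mul_pred n
  have a3 : (0:ℝ) ≤ ((m:ℝ)-(n:ℝ))*(((m:ℝ)-(n:ℝ))+1) := by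
    exact_mod_cast int_mul_succ (m-n)
  have b1 : (m:ℝ)*((m:ℝ)-1) = 0 := by nlinarith [mul_nonneg h₂.le a2, mul_nonneg h₃.le a3, mul_nonneg h₁.le a2, mul_nonneg h₁.le a1]
  have b2 : (n:ℝ)*((n:ℝ)-1) = 0 := by nlinarith [mul_nonneg h₂.le a2, mul_nonneg h₃.le a3, mul_nonneg h₁.le a2, mul_nonneg h₁.le a1]
  have b3 : ((m:ℝ)-(n:ℝ))*(((m:ℝ)-(n:ℝ))+1) = 0 := by nlinarith [mul_nonneg h₂.le a2, mul_nonneg h₃.le a3, mul_nonneg h₁.le a2, mul_nonneg h₁.le a1]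
  have c1 : m*(m-1) = 0 := by exact_mod_cast b1
  have c2 : n*(n-1) = 0 := by exact_mod_cast b2
  have c3 : (m-n)*((m-n)+1) = 0 := by exact_mod_cast b3
  rcases mul_eq_zero.mp c1 with h|h <;> rcases mul_eq_zero.mp c2 with h'|h' <;>
    rcases mul_eq_zero.mp c3 with h''|h'' <;> omega
lemma lemA (r₁ r₂ r₃ u v : ℝ) (h₁ : 0 < r₁) (h₂ : 0 < r₂) (h₃ : 0 < r₃)
    (H : ∀ m n : ℤ, 0 ≤ Ff r₁ r₂ r₃ u v m n) (m n : ℤ)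
    (hz : Ff r₁ r₂ r₃ u v m n = 0) :
    (m=0∧n=0)∨(m=1∧n=0)∨(m=-1∧n=0)∨(m=0∧n=1)∨(m=0∧n=-1)∨(m=1∧n=1)∨(m=-1∧n=-1) := by
  simp only [Ff, Qr] at hz H
  rcases Int.even_or_odd m with ⟨p, hp⟩ | ⟨p, hp⟩ <;>
    rcases Int.even_or_odd n with ⟨q, hq⟩ | ⟨q, hq⟩ <;> subst hp hq
  · -- even, even
    have h := H p q
    push_cast at hz h
    have t2 : 0 ≤ r₂ * (q:ℝ)^2 := mul_nonneg h₂.le (sq_nonneg _)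
    have t3 : 0 ≤ r₃ * ((p:ℝ)-(q:ℝ))^2 := mul_nonneg h₃.le (sq_nonneg _)
    have hA : r₁ * ((p:ℝ)^2 + (q:ℝ)^2) ≤ r₁ * 0 := by linarith [h, hz, t2, t3]
    have hS := cancel_pos _ _ h₁ hA
    have hp0 : p = 0 := by
      have : (p:ℝ) = 0 := sq_zero_real _ (by linarith [sq_nonneg (q:ℝ)])
      exact_mod_cast this
    have hq0 : q = 0 := by
      have : (q:ℝ) = 0 := sq_zero_real _ (by linarith [sq_nonneg (p:ℝ)])
      exact_mod_cast this
    omega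
  · -- even m = p+p, odd n = 2q+1
    have ha := H p q
    have hb := H p (q+1)
    push_cast at hz ha hb
    have hmn1 : (1:ℝ) ≤ (((p:ℝ)+p) - (2*(q:ℝ)+1))^2 := by
      have h0 : (1:ℝ) ≤ ((2*(p-q-1)+1 : ℤ):ℝ)^2 := by exact_mod_cast odd_sq_ge (p-q-1)
      push_cast at h0; nlinarith [h0]
    have key : r₁*((((p:ℝ)+p))^2 + (2*(q:ℝ)+1)^2 - 1) + r₂*((2*(q:ℝ)+1)^2-1)
        + r₃*(((((p:ℝ)+p)) - (2*(q:ℝ)+1))^2 - 1) ≤ 0 := by linarith [ha, hb, hz]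
    have t3 : 0 ≤ r₃ * ((((p:ℝ)+p) - (2*(q:ℝ)+1))^2 - 1) := mul_nonneg h₃.le (by linarith)
    have tA : 0 ≤ r₁ * ((p:ℝ)+p)^2 := mul_nonneg h₁.le (sq_nonneg _)
    -- bound on n
    have h7 : (r₁+r₂) * ((2*(q:ℝ)+1)^2 - 1) ≤ (r₁+r₂) * 0 := by linarith [key, t3, tA]
    have hN := cancel_pos _ _ (by linarith) h7
    have hq' : (2*q+1:ℤ)^2 ≤ 1 := by
      have : ((2*q+1:ℤ):ℝ)^2 ≤ 1 := by push_cast; linarith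
      exact_mod_cast this
    -- p = 0
    have hn1 : (1:ℝ) ≤ (2*(q:ℝ)+1)^2 := by
      have h0 : (1:ℝ) ≤ ((2*q+1 : ℤ):ℝ)^2 := by exact_mod_cast odd_sq_ge q
      push_cast at h0; linarith
    have t1 : 0 ≤ r₁ * ((2*(q:ℝ)+1)^2 - 1) := mul_nonneg h₁.le (by linarith)
    have t2 : 0 ≤ r₂ * ((2*(q:ℝ)+1)^2 - 1) := mul_nonneg h₂.le (by linarith)
    have hA : r₁ * (((p:ℝ)+p)^2) ≤ r₁ * 0 := by linarith [key, t1, t2, t3]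
    have hp0 : p = 0 := by
      have h5 : (p:ℝ) + p = 0 := sq_zero_real _ (cancel_pos _ _ h₁ hA)
      have : (p:ℝ) = 0 := by linarith
      exact_mod_cast this
    rcases odd_sq_le q hq' with h | h <;> omega
  · -- odd m = 2p+1, even n = q+q
    have ha := H p q
    have hb := H (p+1) q
    push_cast at hz ha hb
    have hm1 : (1:ℝ) ≤ (2*(p:ℝ)+1)^2 := by
      have h0 : (1:ℝ) ≤ ((2*p+1 : ℤ):ℝ)^2 := by exact_mod_cast odd_sq_ge p
      push_cast at h0; linarith
    have hmn1 : (1:ℝ) ≤ ((2*(p:ℝ)+1) - ((q:ℝ)+q))^2 := by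
      have h0 : (1:ℝ) ≤ ((2*(p-q)+1 : ℤ):ℝ)^2 := by exact_mod_cast odd_sq_ge (p-q)
      push_cast at h0; nlinarith [h0]
    have key : r₁*((2*(p:ℝ)+1)^2 + ((q:ℝ)+q)^2 - 1) + r₂*(((q:ℝ)+q)^2)
        + r₃*(((2*(p:ℝ)+1) - ((q:ℝ)+q))^2 - 1) ≤ 0 := by linarith [ha, hb, hz]
    have t1 : 0 ≤ r₁ * ((2*(p:ℝ)+1)^2 - 1) := mul_nonneg h₁.le (by linarith)
    have t3 : 0 ≤ r₃ * (((2*(p:ℝ)+1) - ((q:ℝ)+q))^2 - 1) := mul_nonneg h₃.le (by linarith)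
    have h7 : (r₁+r₂) * (((q:ℝ)+q)^2) ≤ (r₁+r₂) * 0 := by linarith [key, t1, t3]
    have hq0r : (q:ℝ) = 0 := by
      have h5 := sq_zero_real _ (cancel_pos _ _ (by linarith : (0:ℝ) < r₁+r₂) h7)
      linarith
    have hq0 : q = 0 := by exact_mod_cast hq0r
    rw [hq0r] at key
    have h8 : (r₁+r₃) * ((2*(p:ℝ)+1)^2 - 1) ≤ (r₁+r₃) * 0 := by linarith [key]
    have hM := cancel_pos _ _ (by linarith) h8
    have hp' : (2*p+1:ℤ)^2 ≤ 1 := by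
      have : ((2*p+1:ℤ):ℝ)^2 ≤ 1 := by push_cast; linarith
      exact_mod_cast this
    rcases odd_sq_le p hp' with h | h <;> omega
  · -- odd, odd
    have ha := H p q
    have hb := H (p+1) (q+1)
    push_cast at hz ha hb
    have hm1 : (1:ℝ) ≤ (2*(p:ℝ)+1)^2 := by
      have h0 : (1:ℝ) ≤ ((2*p+1 : ℤ):ℝ)^2 := by exact_mod_cast odd_sq_ge p
      push_cast at h0; linarith
    have hn1 : (1:ℝ) ≤ (2*(q:ℝ)+1)^2 := by
      have h0 : (1:ℝ) ≤ ((2*q+1 : ℤ):ℝ)^2 := by exact_mod_cast odd_sq_ge q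
      push_cast at h0; linarith
    have key : r₁*((2*(p:ℝ)+1)^2 + (2*(q:ℝ)+1)^2 - 2) + r₂*((2*(q:ℝ)+1)^2 - 1)
        + r₃*((2*(p:ℝ)+1) - (2*(q:ℝ)+1))^2 ≤ 0 := by linarith [ha, hb, hz]
    have t1 : 0 ≤ r₁*((2*(p:ℝ)+1)^2 + (2*(q:ℝ)+1)^2 - 2) := mul_nonneg h₁.le (by linarith)
    have t2 : 0 ≤ r₂*((2*(q:ℝ)+1)^2 - 1) := mul_nonneg h₂.le (by linarith)
    have hA : r₃ * (((2*(p:ℝ)+1) - (2*(q:ℝ)+1))^2) ≤ r₃ * 0 := by linarith [key, t1, t2]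
    have hpqr : (p:ℝ) = (q:ℝ) := by
      have h5 := sq_zero_real _ (cancel_pos _ _ h₃ hA)
      linarith
    have hpq : p = q := by exact_mod_cast hpqr
    rw [hpqr] at key
    have h8 : (2*r₁+r₂) * ((2*(q:ℝ)+1)^2 - 1) ≤ (2*r₁+r₂) * 0 := by linarith [key]
    have hN := cancel_pos _ _ (by linarith) h8
    have hq' : (2*q+1:ℤ)^2 ≤ 1 := by
      have : ((2*q+1:ℤ):ℝ)^2 ≤ 1 := by push_cast; linarith
      exact_mod_cast this
    rcases odd_sq_le q hq' with h | h <;> omega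


/-! exclusion lemmas -/
lemma exP1 (r₁ r₂ r₃ u v : ℝ) (h₁ : 0 < r₁) (h₂ : 0 < r₂) (h₃ : 0 < r₃)
    (H : ∀ m n : ℤ, 0 ≤ Ff r₁ r₂ r₃ u v m n)
    (e1 : Ff r₁ r₂ r₃ u v ((1:ℤ):ℝ) ((0:ℤ):ℝ) = 0)
    (e2 : Ff r₁ r₂ r₃ u v ((-1:ℤ):ℝ) ((0:ℤ):ℝ) = 0) : False := by
  simp only [Ff, Qr] at e1 e2
  push_cast at e1 e2
  linarith
lemma exP2 (r₁ r₂ r₃ u v : ℝ) (h₁ : 0 < r₁) (h₂ : 0 < r₂) (h₃ : 0 < r₃)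
    (H : ∀ m n : ℤ, 0 ≤ Ff r₁ r₂ r₃ u v m n)
    (e1 : Ff r₁ r₂ r₃ u v ((0:ℤ):ℝ) ((1:ℤ):ℝ) = 0)
    (e2 : Ff r₁ r₂ r₃ u v ((0:ℤ):ℝ) ((-1:ℤ):ℝ) = 0) : False := by
  simp only [Ff, Qr] at e1 e2
  push_cast at e1 e2
  linarith
lemma exP3 (r₁ r₂ r₃ u v : ℝ) (h₁ : 0 < r₁) (h₂ : 0 < r₂) (h₃ : 0 < r₃)
    (H : ∀ m n : ℤ, 0 ≤ Ff r₁ r₂ r₃ u v m n)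
    (e1 : Ff r₁ r₂ r₃ u v ((1:ℤ):ℝ) ((1:ℤ):ℝ) = 0)
    (e2 : Ff r₁ r₂ r₃ u v ((-1:ℤ):ℝ) ((-1:ℤ):ℝ) = 0) : False := by
  simp only [Ff, Qr] at e1 e2
  push_cast at e1 e2
  linarith
lemma exP4 (r₁ r₂ r₃ u v : ℝ) (h₁ : 0 < r₁) (h₂ : 0 < r₂) (h₃ : 0 < r₃)
    (H : ∀ m n : ℤ, 0 ≤ Ff r₁ r₂ r₃ u v m n)
    (e1 : Ff r₁ r₂ r₃ u v ((1:ℤ):ℝ) ((0:ℤ):ℝ) = 0)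
    (e2 : Ff r₁ r₂ r₃ u v ((0:ℤ):ℝ) ((1:ℤ):ℝ) = 0) : False := by
  have h := H (1) (1)
  simp only [Ff, Qr] at e1 e2 h
  push_cast at e1 e2 h
  linarith
lemma exP5 (r₁ r₂ r₃ u v : ℝ) (h₁ : 0 < r₁) (h₂ : 0 < r₂) (h₃ : 0 < r₃)
    (H : ∀ m n : ℤ, 0 ≤ Ff r₁ r₂ r₃ u v m n)
    (e1 : Ff r₁ r₂ r₃ u v ((-1:ℤ):ℝ) ((0:ℤ):ℝ) = 0)
    (e2 : Ff r₁ r₂ r₃ u v ((0:ℤ):ℝ) ((-1:ℤ):ℝ) = 0) : False := by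
  have h := H (-1) (-1)
  simp only [Ff, Qr] at e1 e2 h
  push_cast at e1 e2 h
  linarith
lemma exP6 (r₁ r₂ r₃ u v : ℝ) (h₁ : 0 < r₁) (h₂ : 0 < r₂) (h₃ : 0 < r₃)
    (H : ∀ m n : ℤ, 0 ≤ Ff r₁ r₂ r₃ u v m n)
    (e1 : Ff r₁ r₂ r₃ u v ((1:ℤ):ℝ) ((0:ℤ):ℝ) = 0)
    (e2 : Ff r₁ r₂ r₃ u v ((-1:ℤ):ℝ) ((-1:ℤ):ℝ) = 0) : False := by
  have h := H (0) (-1)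
  simp only [Ff, Qr] at e1 e2 h
  push_cast at e1 e2 h
  linarith
lemma exP7 (r₁ r₂ r₃ u v : ℝ) (h₁ : 0 < r₁) (h₂ : 0 < r₂) (h₃ : 0 < r₃)
    (H : ∀ m n : ℤ, 0 ≤ Ff r₁ r₂ r₃ u v m n)
    (e1 : Ff r₁ r₂ r₃ u v ((-1:ℤ):ℝ) ((0:ℤ):ℝ) = 0)
    (e2 : Ff r₁ r₂ r₃ u v ((1:ℤ):ℝ) ((1:ℤ):ℝ) = 0) : False := by
  have h := H (0) (1)
  simp only [Ff, Qr] at e1 e2 h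
  push_cast at e1 e2 h
  linarith
lemma exP8 (r₁ r₂ r₃ u v : ℝ) (h₁ : 0 < r₁) (h₂ : 0 < r₂) (h₃ : 0 < r₃)
    (H : ∀ m n : ℤ, 0 ≤ Ff r₁ r₂ r₃ u v m n)
    (e1 : Ff r₁ r₂ r₃ u v ((0:ℤ):ℝ) ((1:ℤ):ℝ) = 0)
    (e2 : Ff r₁ r₂ r₃ u v ((-1:ℤ):ℝ) ((-1:ℤ):ℝ) = 0) : False := by
  have h := H (-1) (0)
  simp only [Ff, Qr] at e1 e2 h
  push_cast at e1 e2 h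
  linarith
lemma exP9 (r₁ r₂ r₃ u v : ℝ) (h₁ : 0 < r₁) (h₂ : 0 < r₂) (h₃ : 0 < r₃)
    (H : ∀ m n : ℤ, 0 ≤ Ff r₁ r₂ r₃ u v m n)
    (e1 : Ff r₁ r₂ r₃ u v ((0:ℤ):ℝ) ((-1:ℤ):ℝ) = 0)
    (e2 : Ff r₁ r₂ r₃ u v ((1:ℤ):ℝ) ((1:ℤ):ℝ) = 0) : False := by
  have h := H (1) (0)
  simp only [Ff, Qr] at e1 e2 h
  push_cast at e1 e2 h
  linarith
lemma pairD (r₁ r₂ r₃ u v : ℝ) (h₁ : 0 < r₁) (h₂ : 0 < r₂) (h₃ : 0 < r₃)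
    (H : ∀ m n : ℤ, 0 ≤ Ff r₁ r₂ r₃ u v m n) (x1 y1 x2 y2 : ℤ)
    (hz1 : Ff r₁ r₂ r₃ u v x1 y1 = 0) (hz2 : Ff r₁ r₂ r₃ u v x2 y2 = 0)
    (hne1 : ¬(x1 = 0 ∧ y1 = 0)) (hne2 : ¬(x2 = 0 ∧ y2 = 0))
    (hne12 : ¬(x1 = x2 ∧ y1 = y2)) :
    ((x1=1∧y1=0)∧(x2=1∧y2=1)) ∨ ((x1=1∧y1=1)∧(x2=1∧y2=0)) ∨
    ((x1=0∧y1=1)∧(x2=1∧y2=1)) ∨ ((x1=1∧y1=1)∧(x2=0∧y2=1)) ∨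
    ((x1=1∧y1=0)∧(x2=0∧y2=-1)) ∨ ((x1=0∧y1=-1)∧(x2=1∧y2=0)) ∨
    ((x1=-1∧y1=0)∧(x2=0∧y2=1)) ∨ ((x1=0∧y1=1)∧(x2=-1∧y2=0)) ∨
    ((x1=-1∧y1=0)∧(x2=-1∧y2=-1)) ∨ ((x1=-1∧y1=-1)∧(x2=-1∧y2=0)) ∨
    ((x1=0∧y1=-1)∧(x2=-1∧y2=-1)) ∨ ((x1=-1∧y1=-1)∧(x2=0∧y2=-1)) := by
  rcases lemA r₁ r₂ r₃ u v h₁ h₂ h₃ H x1 y1 hz1 with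
    ⟨rfl,rfl⟩|⟨rfl,rfl⟩|⟨rfl,rfl⟩|⟨rfl,rfl⟩|⟨rfl,rfl⟩|⟨rfl,rfl⟩|⟨rfl,rfl⟩
  · rcases lemA r₁ r₂ r₃ u v h₁ h₂ h₃ H x2 y2 hz2 with
      ⟨rfl,rfl⟩|⟨rfl,rfl⟩|⟨rfl,rfl⟩|⟨rfl,rfl⟩|⟨rfl,rfl⟩|⟨rfl,rfl⟩|⟨rfl,rfl⟩
    · exact absurd ⟨rfl, rfl⟩ hne1
    · exact absurd ⟨rfl, rfl⟩ hne1
    · exact absurd ⟨rfl, rfl⟩ hne1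
    · exact absurd ⟨rfl, rfl⟩ hne1
    · exact absurd ⟨rfl, rfl⟩ hne1
    · exact absurd ⟨rfl, rfl⟩ hne1
    · exact absurd ⟨rfl, rfl⟩ hne1
  · rcases lemA r₁ r₂ r₃ u v h₁ h₂ h₃ H x2 y2 hz2 with
      ⟨rfl,rfl⟩|⟨rfl,rfl⟩|⟨rfl,rfl⟩|⟨rfl,rfl⟩|⟨rfl,rfl⟩|⟨rfl,rfl⟩|⟨rfl,rfl⟩
    · exact absurd ⟨rfl, rfl⟩ hne2
    · exact absurd ⟨rfl, rfl⟩ hne12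
    · exact (exP1 r₁ r₂ r₃ u v h₁ h₂ h₃ H hz1 hz2).elim
    · exact (exP4 r₁ r₂ r₃ u v h₁ h₂ h₃ H hz1 hz2).elim
    · exact Or.inr (Or.inr (Or.inr (Or.inr (Or.inl ⟨⟨rfl,rfl⟩,⟨rfl,rfl⟩⟩))))
    · exact Or.inl ⟨⟨rfl,rfl⟩,⟨rfl,rfl⟩⟩
    · exact (exP6 r₁ r₂ r₃ u v h₁ h₂ h₃ H hz1 hz2).elim
  · rcases lemA r₁ r₂ r₃ u v h₁ h₂ h₃ H x2 y2 hz2 with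
      ⟨rfl,rfl⟩|⟨rfl,rfl⟩|⟨rfl,rfl⟩|⟨rfl,rfl⟩|⟨rfl,rfl⟩|⟨rfl,rfl⟩|⟨rfl,rfl⟩
    · exact absurd ⟨rfl, rfl⟩ hne2
    · exact (exP1 r₁ r₂ r₃ u v h₁ h₂ h₃ H hz2 hz1).elim
    · exact absurd ⟨rfl, rfl⟩ hne12
    · exact Or.inr (Or.inr (Or.inr (Or.inr (Or.inr (Or.inr (Or.inl ⟨⟨rfl,rfl⟩,⟨rfl,rfl⟩⟩))))))
    · exact (exP5 r₁ r₂ r₃ u v h₁ h₂ h₃ H hz1 hz2).elim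
    · exact (exP7 r₁ r₂ r₃ u v h₁ h₂ h₃ H hz1 hz2).elim
    · exact Or.inr (Or.inr (Or.inr (Or.inr (Or.inr (Or.inr (Or.inr (Or.inr (Or.inl ⟨⟨rfl,rfl⟩,⟨rfl,rfl⟩⟩))))))))
  · rcases lemA r₁ r₂ r₃ u v h₁ h₂ h₃ H x2 y2 hz2 with
      ⟨rfl,rfl⟩|⟨rfl,rfl⟩|⟨rfl,rfl⟩|⟨rfl,rfl⟩|⟨rfl,rfl⟩|⟨rfl,rfl⟩|⟨rfl,rfl⟩
    · exact absurd ⟨rfl, rfl⟩ hne2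
    · exact (exP4 r₁ r₂ r₃ u v h₁ h₂ h₃ H hz2 hz1).elim
    · exact Or.inr (Or.inr (Or.inr (Or.inr (Or.inr (Or.inr (Or.inr (Or.inl ⟨⟨rfl,rfl⟩,⟨rfl,rfl⟩⟩)))))))
    · exact absurd ⟨rfl, rfl⟩ hne12
    · exact (exP2 r₁ r₂ r₃ u v h₁ h₂ h₃ H hz1 hz2).elim
    · exact Or.inr (Or.inr (Or.inl ⟨⟨rfl,rfl⟩,⟨rfl,rfl⟩⟩))
    · exact (exP8 r₁ r₂ r₃ u v h₁ h₂ h₃ H hz1 hz2).elim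
  · rcases lemA r₁ r₂ r₃ u v h₁ h₂ h₃ H x2 y2 hz2 with
      ⟨rfl,rfl⟩|⟨rfl,rfl⟩|⟨rfl,rfl⟩|⟨rfl,rfl⟩|⟨rfl,rfl⟩|⟨rfl,rfl⟩|⟨rfl,rfl⟩
    · exact absurd ⟨rfl, rfl⟩ hne2
    · exact Or.inr (Or.inr (Or.inr (Or.inr (Or.inr (Or.inl ⟨⟨rfl,rfl⟩,⟨rfl,rfl⟩⟩)))))
    · exact (exP5 r₁ r₂ r₃ u v h₁ h₂ h₃ H hz2 hz1).elim
    · exact (exP2 r₁ r₂ r₃ u v h₁ h₂ h₃ H hz2 hz1).elim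
    · exact absurd ⟨rfl, rfl⟩ hne12
    · exact (exP9 r₁ r₂ r₃ u v h₁ h₂ h₃ H hz1 hz2).elim
    · exact Or.inr (Or.inr (Or.inr (Or.inr (Or.inr (Or.inr (Or.inr (Or.inr (Or.inr (Or.inr (Or.inl ⟨⟨rfl,rfl⟩,⟨rfl,rfl⟩⟩))))))))))
  · rcases lemA r₁ r₂ r₃ u v h₁ h₂ h₃ H x2 y2 hz2 with
      ⟨rfl,rfl⟩|⟨rfl,rfl⟩|⟨rfl,rfl⟩|⟨rfl,rfl⟩|⟨rfl,rfl⟩|⟨rfl,rfl⟩|⟨rfl,rfl⟩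
    · exact absurd ⟨rfl, rfl⟩ hne2
    · exact Or.inr (Or.inl ⟨⟨rfl,rfl⟩,⟨rfl,rfl⟩⟩)
    · exact (exP7 r₁ r₂ r₃ u v h₁ h₂ h₃ H hz2 hz1).elim
    · exact Or.inr (Or.inr (Or.inr (Or.inl ⟨⟨rfl,rfl⟩,⟨rfl,rfl⟩⟩)))
    · exact (exP9 r₁ r₂ r₃ u v h₁ h₂ h₃ H hz2 hz1).elim
    · exact absurd ⟨rfl, rfl⟩ hne12
    · exact (exP3 r₁ r₂ r₃ u v h₁ h₂ h₃ H hz1 hz2).elim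
  · rcases lemA r₁ r₂ r₃ u v h₁ h₂ h₃ H x2 y2 hz2 with
      ⟨rfl,rfl⟩|⟨rfl,rfl⟩|⟨rfl,rfl⟩|⟨rfl,rfl⟩|⟨rfl,rfl⟩|⟨rfl,rfl⟩|⟨rfl,rfl⟩
    · exact absurd ⟨rfl, rfl⟩ hne2
    · exact (exP6 r₁ r₂ r₃ u v h₁ h₂ h₃ H hz2 hz1).elim
    · exact Or.inr (Or.inr (Or.inr (Or.inr (Or.inr (Or.inr (Or.inr (Or.inr (Or.inr (Or.inl ⟨⟨rfl,rfl⟩,⟨rfl,rfl⟩⟩)))))))))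
    · exact (exP8 r₁ r₂ r₃ u v h₁ h₂ h₃ H hz2 hz1).elim
    · exact Or.inr (Or.inr (Or.inr (Or.inr (Or.inr (Or.inr (Or.inr (Or.inr (Or.inr (Or.inr (Or.inr (⟨⟨rfl,rfl⟩,⟨rfl,rfl⟩⟩)))))))))))
    · exact (exP3 r₁ r₂ r₃ u v h₁ h₂ h₃ H hz2 hz1).elim
    · exact absurd ⟨rfl, rfl⟩ hne12
lemma zTrans_hull (v : Fin 2 → ℤ) (S : Set (Fin 2 → ℝ)) :
    zTrans v (convexHull ℝ S) = convexHull ℝ (zTrans v S) := by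
  have h := AffineMap.image_convexHull
    ((AffineEquiv.constVAdd ℝ (Fin 2 → ℝ) (fun i => (v i : ℝ))).toAffineMap) S
  simpa [zTrans, AffineEquiv.coe_toAffineMap, AffineEquiv.constVAdd_apply, vadd_eq_add] using h

lemma zTrans_triple (v : Fin 2 → ℤ) (a b c : Fin 2 → ℝ) :
    zTrans v ({a, b, c} : Set (Fin 2 → ℝ))
      = {cv v + a, cv v + b, cv v + c} := by
  simp only [zTrans, Set.image_insert_eq, Set.image_singleton]
  rfl

lemma line_contra (p q : Fin 2 → ℝ) (M : Set (Fin 2 → ℝ)) (hsub : M ⊆ {p, q})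
    (htop : affineSpan ℝ M = ⊤) : False := by
  have hle : line[ℝ, p, q] = ⊤ := le_antisymm le_top (htop ▸ affineSpan_mono ℝ hsub)
  have h1 : stdV 2 0 +ᵥ p ∈ line[ℝ, p, q] := by rw [hle]; exact AffineSubspace.mem_top ℝ _ _
  have h2 : stdV 2 1 +ᵥ p ∈ line[ℝ, p, q] := by rw [hle]; exact AffineSubspace.mem_top ℝ _ _
  obtain ⟨r, hr⟩ := vadd_left_mem_affineSpan_pair.mp h1
  obtain ⟨s, hs⟩ := vadd_left_mem_affineSpan_pair.mp h2
  have hr0 := congrFun hr 0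
  have hr1 := congrFun hr 1
  have hs0 := congrFun hs 0
  have hs1 := congrFun hs 1
  simp [stdV, Pi.single_apply, vsub_eq_sub, Pi.smul_apply, Pi.sub_apply] at hr0 hr1 hs0 hs1
  rcases hr1 with h | h <;> rcases hs0 with h' | h' <;> simp_all

lemma span_triple_top (σ : Set (Fin 2 → ℝ)) (P : Fin 2 → ℝ)
    (hP : P ∈ σ) (hD : P + (stdV 2 0 + stdV 2 1) ∈ σ)
    (hA : P + stdV 2 0 ∈ σ ∨ P + stdV 2 1 ∈ σ) :
    affineSpan ℝ σ = ⊤ := by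
  apply le_antisymm le_top
  intro x _
  have hPm := subset_affineSpan ℝ σ hP
  have hDm := subset_affineSpan ℝ σ hD
  rcases hA with hA | hA
  · have hAm := subset_affineSpan ℝ σ hA
    have m1 := AffineSubspace.smul_vsub_vadd_mem (affineSpan ℝ σ)
      (x 1 - P 1) hDm hPm hPm
    have m2 := AffineSubspace.smul_vsub_vadd_mem (affineSpan ℝ σ)
      ((x 0 - P 0) - (x 1 - P 1)) hAm hPm m1
    convert m2 using 1
    funext i
    fin_cases i <;>
      simp [stdV, Pi.single_apply, vsub_eq_sub, vadd_eq_add] <;> ring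
  · have hAm := subset_affineSpan ℝ σ hA
    have m1 := AffineSubspace.smul_vsub_vadd_mem (affineSpan ℝ σ)
      (x 0 - P 0) hDm hPm hPm
    have m2 := AffineSubspace.smul_vsub_vadd_mem (affineSpan ℝ σ)
      ((x 1 - P 1) - (x 0 - P 0)) hAm hPm m1
    convert m2 using 1
    funext i
    fin_cases i <;>
      simp [stdV, Pi.single_apply, vsub_eq_sub, vadd_eq_add] <;> ring
/-- The set of lattice points nearest to `α`. -/
def Mset (r₁ r₂ r₃ : ℝ) (α : Fin 2 → ℝ) : Set (Fin 2 → ℝ) :=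
  {a | a ∈ latticePts 2 ∧ ∀ b ∈ latticePts 2,
    Qr r₁ r₂ r₃ (a 0 - α 0) (a 1 - α 1) ≤ Qr r₁ r₂ r₃ (b 0 - α 0) (b 1 - α 1)}

lemma cv_eq_of (a b : Fin 2 → ℤ) (h0 : a 0 = b 0) (h1 : a 1 = b 1) : cv a = cv b := by
  funext i; fin_cases i <;> simp [cv, h0, h1]
theorem delaunay_cells_V1_dim_two
    (r₁ r₂ r₃ : ℝ) (h₁ : 0 < r₁) (h₂ : 0 < r₂) (h₃ : 0 < r₃) :
    ∀ σ : Set (Fin 2 → ℝ),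
      (IsDelaunayCell
        (fun x y => x ⬝ᵥ
          ((r₁ • !![(1:ℝ), 0; 0, 1] + r₂ • !![(0:ℝ), 0; 0, 1]
            + r₃ • !![(1:ℝ), -1; -1, 1]).mulVec y)) σ ∧
        affineSpan ℝ σ = ⊤) ↔
      ∃ v : Fin 2 → ℤ,
        σ = zTrans v (convexHull ℝ
              {(0 : Fin 2 → ℝ), stdV 2 0, stdV 2 0 + stdV 2 1}) ∨
        σ = zTrans v (convexHull ℝ
              {(0 : Fin 2 → ℝ), stdV 2 1, stdV 2 0 + stdV 2 1}) := by
  intro σ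
  constructor
  · rintro ⟨⟨α, hσ⟩, hspan⟩
    have hσ' : σ = convexHull ℝ (Mset r₁ r₂ r₃ α) := by
      rw [hσ]; congr 1; ext a
      simp only [Set.mem_setOf_eq, Mset, bmat_diag, Pi.sub_apply]
    have htop : affineSpan ℝ (Mset r₁ r₂ r₃ α) = ⊤ := by
      rw [← affineSpan_convexHull, ← hσ']; exact hspan
    rcases Set.eq_empty_or_nonempty (Mset r₁ r₂ r₃ α) with hMe | ⟨p, hp⟩
    · exact ((line_contra 0 0 _ (by rw [hMe]; exact Set.empty_subset _) htop)).elim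
    obtain ⟨wp, rfl⟩ := lattice_iff.mp hp.1
    obtain ⟨uu, huu⟩ : ∃ u : ℝ, u = (r₁+r₃)*(α 0 - cv wp 0) + (-r₃)*(α 1 - cv wp 1) := ⟨_, rfl⟩
    obtain ⟨vv, hvv⟩ : ∃ u : ℝ, u = (-r₃)*(α 0 - cv wp 0) + (r₁+r₂+r₃)*(α 1 - cv wp 1) := ⟨_, rfl⟩
    have H : ∀ m n : ℤ, 0 ≤ Ff r₁ r₂ r₃ uu vv (m:ℝ) (n:ℝ) := by
      intro m n
      have hb := hp.2 (cv (fun i => wp i + ![m, n] i)) (cv_mem _)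
      have hd := key_diff r₁ r₂ r₃ α (cv wp) (cv (fun i => wp i + ![m, n] i)) (m:ℝ) (n:ℝ)
        (by simp only [cv, Matrix.cons_val_zero]; push_cast; ring)
        (by simp only [cv, Matrix.cons_val_one, Matrix.head_cons]; push_cast; ring)
      rw [← huu, ← hvv] at hd
      linarith [hd, hb]
    have hzero : ∀ w : Fin 2 → ℤ, cv w ∈ Mset r₁ r₂ r₃ α →
        Ff r₁ r₂ r₃ uu vv ((w 0 - wp 0 : ℤ) : ℝ) ((w 1 - wp 1 : ℤ) : ℝ) = 0 := by
      intro w hw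
      have ha := hw.2 (cv wp) (cv_mem wp)
      have hb := hp.2 (cv w) (cv_mem w)
      have hd := key_diff r₁ r₂ r₃ α (cv wp) (cv w)
        ((w 0 - wp 0 : ℤ) : ℝ) ((w 1 - wp 1 : ℤ) : ℝ)
        (by simp only [cv]; push_cast; ring) (by simp only [cv]; push_cast; ring)
      rw [← huu, ← hvv] at hd
      linarith [hd, ha, hb]
    have hmem2 : ∀ w : Fin 2 → ℤ,
        Ff r₁ r₂ r₃ uu vv ((w 0 - wp 0 : ℤ) : ℝ) ((w 1 - wp 1 : ℤ) : ℝ) = 0 →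
        cv w ∈ Mset r₁ r₂ r₃ α := by
      intro w hf
      refine ⟨cv_mem w, ?_⟩
      intro b hb
      obtain ⟨wb, rfl⟩ := lattice_iff.mp hb
      have hd := key_diff r₁ r₂ r₃ α (cv wp) (cv w)
        ((w 0 - wp 0 : ℤ) : ℝ) ((w 1 - wp 1 : ℤ) : ℝ)
        (by simp only [cv]; push_cast; ring) (by simp only [cv]; push_cast; ring)
      have hd2 := key_diff r₁ r₂ r₃ α (cv wp) (cv wb)
        ((wb 0 - wp 0 : ℤ) : ℝ) ((wb 1 - wp 1 : ℤ) : ℝ)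
        (by simp only [cv]; push_cast; ring) (by simp only [cv]; push_cast; ring)
      rw [← huu, ← hvv] at hd hd2
      have h2 := H (wb 0 - wp 0) (wb 1 - wp 1)
      linarith [hd, hd2, h2]
    by_cases hex : ∃ q₁ ∈ Mset r₁ r₂ r₃ α, ∃ q₂ ∈ Mset r₁ r₂ r₃ α,
        q₁ ≠ cv wp ∧ q₂ ≠ cv wp ∧ q₁ ≠ q₂
    swap
    · push_neg at hex
      by_cases hq : ∃ q ∈ Mset r₁ r₂ r₃ α, q ≠ cv wp
      · obtain ⟨q0, hq0M, hq0ne⟩ := hq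
        refine ((line_contra (cv wp) q0 _ ?_ htop)).elim
        intro x hx
        rcases eq_or_ne x (cv wp) with h | h
        · exact Or.inl h
        · rcases eq_or_ne x q0 with h' | h'
          · exact Or.inr h'
          · exact (h' (hex x hx q0 hq0M h hq0ne)).elim
      · push_neg at hq
        exact ((line_contra (cv wp) (cv wp) _ (fun x hx => Or.inl (hq x hx)) htop)).elim
    obtain ⟨q₁, hq₁, q₂, hq₂, hne₁, hne₂, hne₁₂⟩ := hex
    obtain ⟨w1, rfl⟩ := lattice_iff.mp hq₁.1
    obtain ⟨w2, rfl⟩ := lattice_iff.mp hq₂.1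
    have hz1 := hzero w1 hq₁
    have hz2 := hzero w2 hq₂
    have hne1' : ¬(w1 0 - wp 0 = 0 ∧ w1 1 - wp 1 = 0) := by
      rintro ⟨e1, e2⟩; exact hne₁ (cv_eq_of _ _ (by omega) (by omega))
    have hne2' : ¬(w2 0 - wp 0 = 0 ∧ w2 1 - wp 1 = 0) := by
      rintro ⟨e1, e2⟩; exact hne₂ (cv_eq_of _ _ (by omega) (by omega))
    have hne12' : ¬(w1 0 - wp 0 = w2 0 - wp 0 ∧ w1 1 - wp 1 = w2 1 - wp 1) := by
      rintro ⟨e1, e2⟩; exact hne₁₂ (cv_eq_of _ _ (by omega) (by omega))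
    have hD := pairD r₁ r₂ r₃ uu vv h₁ h₂ h₃ H _ _ _ _ hz1 hz2 hne1' hne2' hne12'
    have hMeq : Mset r₁ r₂ r₃ α = {cv wp, cv w1, cv w2} := by
      apply Set.Subset.antisymm
      · intro x hx
        obtain ⟨wx, rfl⟩ := lattice_iff.mp hx.1
        have hzx := hzero wx hx
        simp only [Set.mem_insert_iff, Set.mem_singleton_iff]
        by_cases c1 : wx 0 = wp 0 ∧ wx 1 = wp 1
        · exact Or.inl (cv_eq_of _ _ c1.1 c1.2)
        by_cases c2 : wx 0 = w1 0 ∧ wx 1 = w1 1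
        · exact Or.inr (Or.inl (cv_eq_of _ _ c2.1 c2.2))
        by_cases c3 : wx 0 = w2 0 ∧ wx 1 = w2 1
        · exact Or.inr (Or.inr (cv_eq_of _ _ c3.1 c3.2))
        exfalso
        have hD2 := pairD r₁ r₂ r₃ uu vv h₁ h₂ h₃ H _ _ _ _ hz1 hzx hne1'
          (by omega) (by omega)
        have hD3 := pairD r₁ r₂ r₃ uu vv h₁ h₂ h₃ H _ _ _ _ hz2 hzx hne2'
          (by omega) (by omega)
        omega
      · intro x hx
        simp only [Set.mem_insert_iff, Set.mem_singleton_iff] at hx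
        rcases hx with rfl | rfl | rfl
        exacts [hp, hq₁, hq₂]
    rcases hD with hD|hD|hD|hD|hD|hD|hD|hD|hD|hD|hD|hD
    · -- z1=(1, 0), z2=(1, 1)
      obtain ⟨⟨ha1, hb1⟩, ha2, hb2⟩ := hD
      refine ⟨(fun i => wp i + ![(0:ℤ), (0:ℤ)] i), Or.inl ?_⟩
      rw [hσ', hMeq, zTrans_hull, zTrans_triple]
      have e0 : cv (fun i => wp i + ![(0:ℤ), (0:ℤ)] i) + ((0 : Fin 2 → ℝ)) = cv wp := by
        funext i; fin_cases i <;>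
          simp [cv, stdV, Pi.single_apply] <;> push_cast <;> ring
      have e1 : cv (fun i => wp i + ![(0:ℤ), (0:ℤ)] i) + (stdV 2 0) = cv w1 := by
        have c0 : w1 0 = wp 0 + (1) := by omega
        have c1 : w1 1 = wp 1 + (0) := by omega
        funext i; fin_cases i <;>
          simp [cv, stdV, Pi.single_apply, c0, c1] <;> push_cast <;> ring
      have e2 : cv (fun i => wp i + ![(0:ℤ), (0:ℤ)] i) + (stdV 2 0 + stdV 2 1) = cv w2 := by
        have c0 : w2 0 = wp 0 + (1) := by omega
        have c1 : w2 1 = wp 1 + (1) := by omega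
        funext i; fin_cases i <;>
          simp [cv, stdV, Pi.single_apply, c0, c1] <;> push_cast <;> ring
      rw [e0, e1, e2]
    · -- z1=(1, 1), z2=(1, 0)
      obtain ⟨⟨ha1, hb1⟩, ha2, hb2⟩ := hD
      refine ⟨(fun i => wp i + ![(0:ℤ), (0:ℤ)] i), Or.inl ?_⟩
      rw [hσ', hMeq, zTrans_hull, zTrans_triple]
      have e0 : cv (fun i => wp i + ![(0:ℤ), (0:ℤ)] i) + ((0 : Fin 2 → ℝ)) = cv wp := by
        funext i; fin_cases i <;>
          simp [cv, stdV, Pi.single_apply] <;> push_cast <;> ring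
      have e1 : cv (fun i => wp i + ![(0:ℤ), (0:ℤ)] i) + (stdV 2 0) = cv w2 := by
        have c0 : w2 0 = wp 0 + (1) := by omega
        have c1 : w2 1 = wp 1 + (0) := by omega
        funext i; fin_cases i <;>
          simp [cv, stdV, Pi.single_apply, c0, c1] <;> push_cast <;> ring
      have e2 : cv (fun i => wp i + ![(0:ℤ), (0:ℤ)] i) + (stdV 2 0 + stdV 2 1) = cv w1 := by
        have c0 : w1 0 = wp 0 + (1) := by omega
        have c1 : w1 1 = wp 1 + (1) := by omega
        funext i; fin_cases i <;>
          simp [cv, stdV, Pi.single_apply, c0, c1] <;> push_cast <;> ring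
      rw [e0, e1, e2, Set.pair_comm (cv w2) (cv w1)]
    · -- z1=(0, 1), z2=(1, 1)
      obtain ⟨⟨ha1, hb1⟩, ha2, hb2⟩ := hD
      refine ⟨(fun i => wp i + ![(0:ℤ), (0:ℤ)] i), Or.inr ?_⟩
      rw [hσ', hMeq, zTrans_hull, zTrans_triple]
      have e0 : cv (fun i => wp i + ![(0:ℤ), (0:ℤ)] i) + ((0 : Fin 2 → ℝ)) = cv wp := by
        funext i; fin_cases i <;>
          simp [cv, stdV, Pi.single_apply] <;> push_cast <;> ring
      have e1 : cv (fun i => wp i + ![(0:ℤ), (0:ℤ)] i) + (stdV 2 1) = cv w1 := by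
        have c0 : w1 0 = wp 0 + (0) := by omega
        have c1 : w1 1 = wp 1 + (1) := by omega
        funext i; fin_cases i <;>
          simp [cv, stdV, Pi.single_apply, c0, c1] <;> push_cast <;> ring
      have e2 : cv (fun i => wp i + ![(0:ℤ), (0:ℤ)] i) + (stdV 2 0 + stdV 2 1) = cv w2 := by
        have c0 : w2 0 = wp 0 + (1) := by omega
        have c1 : w2 1 = wp 1 + (1) := by omega
        funext i; fin_cases i <;>
          simp [cv, stdV, Pi.single_apply, c0, c1] <;> push_cast <;> ring
      rw [e0, e1, e2]
    · -- z1=(1, 1), z2=(0, 1)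
      obtain ⟨⟨ha1, hb1⟩, ha2, hb2⟩ := hD
      refine ⟨(fun i => wp i + ![(0:ℤ), (0:ℤ)] i), Or.inr ?_⟩
      rw [hσ', hMeq, zTrans_hull, zTrans_triple]
      have e0 : cv (fun i => wp i + ![(0:ℤ), (0:ℤ)] i) + ((0 : Fin 2 → ℝ)) = cv wp := by
        funext i; fin_cases i <;>
          simp [cv, stdV, Pi.single_apply] <;> push_cast <;> ring
      have e1 : cv (fun i => wp i + ![(0:ℤ), (0:ℤ)] i) + (stdV 2 1) = cv w2 := by
        have c0 : w2 0 = wp 0 + (0) := by omega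
        have c1 : w2 1 = wp 1 + (1) := by omega
        funext i; fin_cases i <;>
          simp [cv, stdV, Pi.single_apply, c0, c1] <;> push_cast <;> ring
      have e2 : cv (fun i => wp i + ![(0:ℤ), (0:ℤ)] i) + (stdV 2 0 + stdV 2 1) = cv w1 := by
        have c0 : w1 0 = wp 0 + (1) := by omega
        have c1 : w1 1 = wp 1 + (1) := by omega
        funext i; fin_cases i <;>
          simp [cv, stdV, Pi.single_apply, c0, c1] <;> push_cast <;> ring
      rw [e0, e1, e2, Set.pair_comm (cv w2) (cv w1)]
    · -- z1=(1, 0), z2=(0, -1)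
      obtain ⟨⟨ha1, hb1⟩, ha2, hb2⟩ := hD
      refine ⟨(fun i => wp i + ![(0:ℤ), (-1:ℤ)] i), Or.inr ?_⟩
      rw [hσ', hMeq, zTrans_hull, zTrans_triple]
      have e0 : cv (fun i => wp i + ![(0:ℤ), (-1:ℤ)] i) + ((0 : Fin 2 → ℝ)) = cv w2 := by
        have c0 : w2 0 = wp 0 + (0) := by omega
        have c1 : w2 1 = wp 1 + (-1) := by omega
        funext i; fin_cases i <;>
          simp [cv, stdV, Pi.single_apply, c0, c1] <;> push_cast <;> ring
      have e1 : cv (fun i => wp i + ![(0:ℤ), (-1:ℤ)] i) + (stdV 2 1) = cv wp := by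
        funext i; fin_cases i <;>
          simp [cv, stdV, Pi.single_apply] <;> push_cast <;> ring
      have e2 : cv (fun i => wp i + ![(0:ℤ), (-1:ℤ)] i) + (stdV 2 0 + stdV 2 1) = cv w1 := by
        have c0 : w1 0 = wp 0 + (1) := by omega
        have c1 : w1 1 = wp 1 + (0) := by omega
        funext i; fin_cases i <;>
          simp [cv, stdV, Pi.single_apply, c0, c1] <;> push_cast <;> ring
      rw [e0, e1, e2, Set.insert_comm (cv w2) (cv wp), Set.pair_comm (cv w2) (cv w1)]
    · -- z1=(0, -1), z2=(1, 0)
      obtain ⟨⟨ha1, hb1⟩, ha2, hb2⟩ := hD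
      refine ⟨(fun i => wp i + ![(0:ℤ), (-1:ℤ)] i), Or.inr ?_⟩
      rw [hσ', hMeq, zTrans_hull, zTrans_triple]
      have e0 : cv (fun i => wp i + ![(0:ℤ), (-1:ℤ)] i) + ((0 : Fin 2 → ℝ)) = cv w1 := by
        have c0 : w1 0 = wp 0 + (0) := by omega
        have c1 : w1 1 = wp 1 + (-1) := by omega
        funext i; fin_cases i <;>
          simp [cv, stdV, Pi.single_apply, c0, c1] <;> push_cast <;> ring
      have e1 : cv (fun i => wp i + ![(0:ℤ), (-1:ℤ)] i) + (stdV 2 1) = cv wp := by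
        funext i; fin_cases i <;>
          simp [cv, stdV, Pi.single_apply] <;> push_cast <;> ring
      have e2 : cv (fun i => wp i + ![(0:ℤ), (-1:ℤ)] i) + (stdV 2 0 + stdV 2 1) = cv w2 := by
        have c0 : w2 0 = wp 0 + (1) := by omega
        have c1 : w2 1 = wp 1 + (0) := by omega
        funext i; fin_cases i <;>
          simp [cv, stdV, Pi.single_apply, c0, c1] <;> push_cast <;> ring
      rw [e0, e1, e2, Set.insert_comm (cv w1) (cv wp)]
    · -- z1=(-1, 0), z2=(0, 1)
      obtain ⟨⟨ha1, hb1⟩, ha2, hb2⟩ := hD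
      refine ⟨(fun i => wp i + ![(-1:ℤ), (0:ℤ)] i), Or.inl ?_⟩
      rw [hσ', hMeq, zTrans_hull, zTrans_triple]
      have e0 : cv (fun i => wp i + ![(-1:ℤ), (0:ℤ)] i) + ((0 : Fin 2 → ℝ)) = cv w1 := by
        have c0 : w1 0 = wp 0 + (-1) := by omega
        have c1 : w1 1 = wp 1 + (0) := by omega
        funext i; fin_cases i <;>
          simp [cv, stdV, Pi.single_apply, c0, c1] <;> push_cast <;> ring
      have e1 : cv (fun i => wp i + ![(-1:ℤ), (0:ℤ)] i) + (stdV 2 0) = cv wp := by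
        funext i; fin_cases i <;>
          simp [cv, stdV, Pi.single_apply] <;> push_cast <;> ring
      have e2 : cv (fun i => wp i + ![(-1:ℤ), (0:ℤ)] i) + (stdV 2 0 + stdV 2 1) = cv w2 := by
        have c0 : w2 0 = wp 0 + (0) := by omega
        have c1 : w2 1 = wp 1 + (1) := by omega
        funext i; fin_cases i <;>
          simp [cv, stdV, Pi.single_apply, c0, c1] <;> push_cast <;> ring
      rw [e0, e1, e2, Set.insert_comm (cv w1) (cv wp)]
    · -- z1=(0, 1), z2=(-1, 0)
      obtain ⟨⟨ha1, hb1⟩, ha2, hb2⟩ := hD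
      refine ⟨(fun i => wp i + ![(-1:ℤ), (0:ℤ)] i), Or.inl ?_⟩
      rw [hσ', hMeq, zTrans_hull, zTrans_triple]
      have e0 : cv (fun i => wp i + ![(-1:ℤ), (0:ℤ)] i) + ((0 : Fin 2 → ℝ)) = cv w2 := by
        have c0 : w2 0 = wp 0 + (-1) := by omega
        have c1 : w2 1 = wp 1 + (0) := by omega
        funext i; fin_cases i <;>
          simp [cv, stdV, Pi.single_apply, c0, c1] <;> push_cast <;> ring
      have e1 : cv (fun i => wp i + ![(-1:ℤ), (0:ℤ)] i) + (stdV 2 0) = cv wp := by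
        funext i; fin_cases i <;>
          simp [cv, stdV, Pi.single_apply] <;> push_cast <;> ring
      have e2 : cv (fun i => wp i + ![(-1:ℤ), (0:ℤ)] i) + (stdV 2 0 + stdV 2 1) = cv w1 := by
        have c0 : w1 0 = wp 0 + (0) := by omega
        have c1 : w1 1 = wp 1 + (1) := by omega
        funext i; fin_cases i <;>
          simp [cv, stdV, Pi.single_apply, c0, c1] <;> push_cast <;> ring
      rw [e0, e1, e2, Set.insert_comm (cv w2) (cv wp), Set.pair_comm (cv w2) (cv w1)]
    · -- z1=(-1, 0), z2=(-1, -1)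
      obtain ⟨⟨ha1, hb1⟩, ha2, hb2⟩ := hD
      refine ⟨(fun i => wp i + ![(-1:ℤ), (-1:ℤ)] i), Or.inr ?_⟩
      rw [hσ', hMeq, zTrans_hull, zTrans_triple]
      have e0 : cv (fun i => wp i + ![(-1:ℤ), (-1:ℤ)] i) + ((0 : Fin 2 → ℝ)) = cv w2 := by
        have c0 : w2 0 = wp 0 + (-1) := by omega
        have c1 : w2 1 = wp 1 + (-1) := by omega
        funext i; fin_cases i <;>
          simp [cv, stdV, Pi.single_apply, c0, c1] <;> push_cast <;> ring
      have e1 : cv (fun i => wp i + ![(-1:ℤ), (-1:ℤ)] i) + (stdV 2 1) = cv w1 := by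
        have c0 : w1 0 = wp 0 + (-1) := by omega
        have c1 : w1 1 = wp 1 + (0) := by omega
        funext i; fin_cases i <;>
          simp [cv, stdV, Pi.single_apply, c0, c1] <;> push_cast <;> ring
      have e2 : cv (fun i => wp i + ![(-1:ℤ), (-1:ℤ)] i) + (stdV 2 0 + stdV 2 1) = cv wp := by
        funext i; fin_cases i <;>
          simp [cv, stdV, Pi.single_apply] <;> push_cast <;> ring
      rw [e0, e1, e2, Set.pair_comm (cv w1) (cv wp), Set.insert_comm (cv w2) (cv wp), Set.pair_comm (cv w2) (cv w1)]
    · -- z1=(-1, -1), z2=(-1, 0)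
      obtain ⟨⟨ha1, hb1⟩, ha2, hb2⟩ := hD
      refine ⟨(fun i => wp i + ![(-1:ℤ), (-1:ℤ)] i), Or.inr ?_⟩
      rw [hσ', hMeq, zTrans_hull, zTrans_triple]
      have e0 : cv (fun i => wp i + ![(-1:ℤ), (-1:ℤ)] i) + ((0 : Fin 2 → ℝ)) = cv w1 := by
        have c0 : w1 0 = wp 0 + (-1) := by omega
        have c1 : w1 1 = wp 1 + (-1) := by omega
        funext i; fin_cases i <;>
          simp [cv, stdV, Pi.single_apply, c0, c1] <;> push_cast <;> ring
      have e1 : cv (fun i => wp i + ![(-1:ℤ), (-1:ℤ)] i) + (stdV 2 1) = cv w2 := by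
        have c0 : w2 0 = wp 0 + (-1) := by omega
        have c1 : w2 1 = wp 1 + (0) := by omega
        funext i; fin_cases i <;>
          simp [cv, stdV, Pi.single_apply, c0, c1] <;> push_cast <;> ring
      have e2 : cv (fun i => wp i + ![(-1:ℤ), (-1:ℤ)] i) + (stdV 2 0 + stdV 2 1) = cv wp := by
        funext i; fin_cases i <;>
          simp [cv, stdV, Pi.single_apply] <;> push_cast <;> ring
      rw [e0, e1, e2, Set.pair_comm (cv w2) (cv wp), Set.insert_comm (cv w1) (cv wp)]
    · -- z1=(0, -1), z2=(-1, -1)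
      obtain ⟨⟨ha1, hb1⟩, ha2, hb2⟩ := hD
      refine ⟨(fun i => wp i + ![(-1:ℤ), (-1:ℤ)] i), Or.inl ?_⟩
      rw [hσ', hMeq, zTrans_hull, zTrans_triple]
      have e0 : cv (fun i => wp i + ![(-1:ℤ), (-1:ℤ)] i) + ((0 : Fin 2 → ℝ)) = cv w2 := by
        have c0 : w2 0 = wp 0 + (-1) := by omega
        have c1 : w2 1 = wp 1 + (-1) := by omega
        funext i; fin_cases i <;>
          simp [cv, stdV, Pi.single_apply, c0, c1] <;> push_cast <;> ring
      have e1 : cv (fun i => wp i + ![(-1:ℤ), (-1:ℤ)] i) + (stdV 2 0) = cv w1 := by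
        have c0 : w1 0 = wp 0 + (0) := by omega
        have c1 : w1 1 = wp 1 + (-1) := by omega
        funext i; fin_cases i <;>
          simp [cv, stdV, Pi.single_apply, c0, c1] <;> push_cast <;> ring
      have e2 : cv (fun i => wp i + ![(-1:ℤ), (-1:ℤ)] i) + (stdV 2 0 + stdV 2 1) = cv wp := by
        funext i; fin_cases i <;>
          simp [cv, stdV, Pi.single_apply] <;> push_cast <;> ring
      rw [e0, e1, e2, Set.pair_comm (cv w1) (cv wp), Set.insert_comm (cv w2) (cv wp), Set.pair_comm (cv w2) (cv w1)]
    · -- z1=(-1, -1), z2=(0, -1)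
      obtain ⟨⟨ha1, hb1⟩, ha2, hb2⟩ := hD
      refine ⟨(fun i => wp i + ![(-1:ℤ), (-1:ℤ)] i), Or.inl ?_⟩
      rw [hσ', hMeq, zTrans_hull, zTrans_triple]
      have e0 : cv (fun i => wp i + ![(-1:ℤ), (-1:ℤ)] i) + ((0 : Fin 2 → ℝ)) = cv w1 := by
        have c0 : w1 0 = wp 0 + (-1) := by omega
        have c1 : w1 1 = wp 1 + (-1) := by omega
        funext i; fin_cases i <;>
          simp [cv, stdV, Pi.single_apply, c0, c1] <;> push_cast <;> ring
      have e1 : cv (fun i => wp i + ![(-1:ℤ), (-1:ℤ)] i) + (stdV 2 0) = cv w2 := by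
        have c0 : w2 0 = wp 0 + (0) := by omega
        have c1 : w2 1 = wp 1 + (-1) := by omega
        funext i; fin_cases i <;>
          simp [cv, stdV, Pi.single_apply, c0, c1] <;> push_cast <;> ring
      have e2 : cv (fun i => wp i + ![(-1:ℤ), (-1:ℤ)] i) + (stdV 2 0 + stdV 2 1) = cv wp := by
        funext i; fin_cases i <;>
          simp [cv, stdV, Pi.single_apply] <;> push_cast <;> ring
      rw [e0, e1, e2, Set.pair_comm (cv w2) (cv wp), Set.insert_comm (cv w1) (cv wp)]
  · rintro ⟨v, hσ | hσ⟩
    · -- triangle σ₁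
      obtain ⟨γ₀, γ₁, hγ₀, hγ₁⟩ := exists_gamma r₁ r₂ r₃ h₁ h₂ h₃
        ((r₁+r₃)/2) (-r₃+(r₁+r₂+r₃)/2)
      have hu : (r₁+r₃)*((![(v 0:ℝ) + γ₀, (v 1:ℝ) + γ₁]) 0 - cv v 0)
          + (-r₃)*((![(v 0:ℝ) + γ₀, (v 1:ℝ) + γ₁]) 1 - cv v 1) = (r₁+r₃)/2 := by
        simp only [Matrix.cons_val_zero, Matrix.cons_val_one, Matrix.head_cons, cv]
        linear_combination hγ₀
      have hv : (-r₃)*((![(v 0:ℝ) + γ₀, (v 1:ℝ) + γ₁]) 0 - cv v 0)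
          + (r₁+r₂+r₃)*((![(v 0:ℝ) + γ₀, (v 1:ℝ) + γ₁]) 1 - cv v 1)
          = -r₃+(r₁+r₂+r₃)/2 := by
        simp only [Matrix.cons_val_zero, Matrix.cons_val_one, Matrix.head_cons, cv]
        linear_combination hγ₁
      have hdiff : ∀ (w : Fin 2 → ℤ) (m n : ℤ), w 0 = v 0 + m → w 1 = v 1 + n →
          Qr r₁ r₂ r₃ (cv w 0 - (![(v 0:ℝ) + γ₀, (v 1:ℝ) + γ₁]) 0)
              (cv w 1 - (![(v 0:ℝ) + γ₀, (v 1:ℝ) + γ₁]) 1)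
            - Qr r₁ r₂ r₃ (cv v 0 - (![(v 0:ℝ) + γ₀, (v 1:ℝ) + γ₁]) 0)
              (cv v 1 - (![(v 0:ℝ) + γ₀, (v 1:ℝ) + γ₁]) 1)
          = Ff r₁ r₂ r₃ ((r₁+r₃)/2) (-r₃+(r₁+r₂+r₃)/2) (m:ℝ) (n:ℝ) := by
        intro w m n hw0 hw1
        have hd := key_diff r₁ r₂ r₃ (![(v 0:ℝ) + γ₀, (v 1:ℝ) + γ₁]) (cv v) (cv w) (m:ℝ) (n:ℝ)
          (by simp only [cv, hw0]; push_cast; ring) (by simp only [cv, hw1]; push_cast; ring)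
        rw [hu, hv] at hd
        exact hd
      have hminv : ∀ b ∈ latticePts 2,
          Qr r₁ r₂ r₃ (cv v 0 - (![(v 0:ℝ) + γ₀, (v 1:ℝ) + γ₁]) 0)
              (cv v 1 - (![(v 0:ℝ) + γ₀, (v 1:ℝ) + γ₁]) 1)
          ≤ Qr r₁ r₂ r₃ (b 0 - (![(v 0:ℝ) + γ₀, (v 1:ℝ) + γ₁]) 0)
              (b 1 - (![(v 0:ℝ) + γ₀, (v 1:ℝ) + γ₁]) 1) := by
        intro b hb
        obtain ⟨wb, rfl⟩ := lattice_iff.mp hb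
        have hd := hdiff wb (wb 0 - v 0) (wb 1 - v 1) (by ring) (by ring)
        have hn := rev1_nonneg r₁ r₂ r₃ h₁ h₂ h₃ (wb 0 - v 0) (wb 1 - v 1)
        linarith
      have hMeq : Mset r₁ r₂ r₃ ![(v 0:ℝ) + γ₀, (v 1:ℝ) + γ₁]
          = {cv v, cv (fun i => v i + ![1, 0] i), cv (fun i => v i + ![1, 1] i)} := by
        ext x
        constructor
        · rintro ⟨hlat, hmin⟩
          obtain ⟨w, rfl⟩ := lattice_iff.mp hlat
          have hd := hdiff w (w 0 - v 0) (w 1 - v 1) (by ring) (by ring)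
          have h1 := hmin (cv v) (cv_mem v)
          have hn := rev1_nonneg r₁ r₂ r₃ h₁ h₂ h₃ (w 0 - v 0) (w 1 - v 1)
          have hf0 : Ff r₁ r₂ r₃ ((r₁+r₃)/2) (-r₃+(r₁+r₂+r₃)/2)
              ((w 0 - v 0 : ℤ):ℝ) ((w 1 - v 1 : ℤ):ℝ) = 0 := by linarith
          simp only [Set.mem_insert_iff, Set.mem_singleton_iff]
          rcases rev1_zero_iff r₁ r₂ r₃ h₁ h₂ h₃ _ _ hf0 with ⟨e1,e2⟩|⟨e1,e2⟩|⟨e1,e2⟩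
          · exact Or.inl (cv_eq_of _ _ (by omega) (by omega))
          · exact Or.inr (Or.inl (cv_eq_of _ _ (by simp; omega) (by simp; omega)))
          · exact Or.inr (Or.inr (cv_eq_of _ _ (by simp; omega) (by simp; omega)))
        · intro hx
          simp only [Set.mem_insert_iff, Set.mem_singleton_iff] at hx
          rcases hx with rfl | rfl | rfl
          · exact ⟨cv_mem v, hminv⟩
          · refine ⟨cv_mem _, ?_⟩
            intro b hb
            have hd := hdiff (fun i => v i + ![1, 0] i) 1 0 (by simp) (by simp)
            have hf : Ff r₁ r₂ r₃ ((r₁+r₃)/2) (-r₃+(r₁+r₂+r₃)/2) ((1:ℤ):ℝ) ((0:ℤ):ℝ) = 0 := by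
              rw [rev1_eq]; norm_num
            have := hminv b hb
            linarith
          · refine ⟨cv_mem _, ?_⟩
            intro b hb
            have hd := hdiff (fun i => v i + ![1, 1] i) 1 1 (by simp) (by simp)
            have hf : Ff r₁ r₂ r₃ ((r₁+r₃)/2) (-r₃+(r₁+r₂+r₃)/2) ((1:ℤ):ℝ) ((1:ℤ):ℝ) = 0 := by
              rw [rev1_eq]; norm_num
            have := hminv b hb
            linarith
      constructor
      · refine ⟨![(v 0:ℝ) + γ₀, (v 1:ℝ) + γ₁], ?_⟩
        have hset : {a | a ∈ latticePts 2 ∧ ∀ b ∈ latticePts 2,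
            (a - ![(v 0:ℝ) + γ₀, (v 1:ℝ) + γ₁]) ⬝ᵥ
              ((r₁ • !![(1:ℝ), 0; 0, 1] + r₂ • !![(0:ℝ), 0; 0, 1]
                + r₃ • !![(1:ℝ), -1; -1, 1]).mulVec (a - ![(v 0:ℝ) + γ₀, (v 1:ℝ) + γ₁]))
            ≤ (b - ![(v 0:ℝ) + γ₀, (v 1:ℝ) + γ₁]) ⬝ᵥ
              ((r₁ • !![(1:ℝ), 0; 0, 1] + r₂ • !![(0:ℝ), 0; 0, 1]
                + r₃ • !![(1:ℝ), -1; -1, 1]).mulVec (b - ![(v 0:ℝ) + γ₀, (v 1:ℝ) + γ₁]))}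
            = Mset r₁ r₂ r₃ ![(v 0:ℝ) + γ₀, (v 1:ℝ) + γ₁] := by
          ext a
          simp only [Set.mem_setOf_eq, Mset, bmat_diag, Pi.sub_apply]
        rw [hσ, hset, hMeq, zTrans_hull, zTrans_triple]
        have f0 : cv v + (0 : Fin 2 → ℝ) = cv v := by simp
        have f1 : cv v + stdV 2 0 = cv (fun i => v i + ![1, 0] i) := by
          funext i; fin_cases i <;> simp [cv, stdV, Pi.single_apply] <;> push_cast <;> ring
        have f2 : cv v + (stdV 2 0 + stdV 2 1) = cv (fun i => v i + ![1, 1] i) := by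
          funext i; fin_cases i <;> simp [cv, stdV, Pi.single_apply] <;> push_cast <;> ring
        rw [f0, f1, f2]
      · apply span_triple_top σ (cv v)
        · rw [hσ]
          exact ⟨0, subset_convexHull ℝ _ (by simp), by funext i; simp [cv]⟩
        · rw [hσ]
          refine ⟨stdV 2 0 + stdV 2 1, subset_convexHull ℝ _ (by simp), by funext i; simp [cv]⟩
        · left
          rw [hσ]
          exact ⟨stdV 2 0, subset_convexHull ℝ _ (by simp), by funext i; simp [cv]⟩
    · -- triangle σ₂
      obtain ⟨γ₀, γ₁, hγ₀, hγ₁⟩ := exists_gamma r₁ r₂ r₃ h₁ h₂ h₃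
        (-r₃+(r₁+r₃)/2) ((r₁+r₂+r₃)/2)
      have hu : (r₁+r₃)*((![(v 0:ℝ) + γ₀, (v 1:ℝ) + γ₁]) 0 - cv v 0)
          + (-r₃)*((![(v 0:ℝ) + γ₀, (v 1:ℝ) + γ₁]) 1 - cv v 1) = -r₃+(r₁+r₃)/2 := by
        simp only [Matrix.cons_val_zero, Matrix.cons_val_one, Matrix.head_cons, cv]
        linear_combination hγ₀
      have hv : (-r₃)*((![(v 0:ℝ) + γ₀, (v 1:ℝ) + γ₁]) 0 - cv v 0)
          + (r₁+r₂+r₃)*((![(v 0:ℝ) + γ₀, (v 1:ℝ) + γ₁]) 1 - cv v 1)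
          = (r₁+r₂+r₃)/2 := by
        simp only [Matrix.cons_val_zero, Matrix.cons_val_one, Matrix.head_cons, cv]
        linear_combination hγ₁
      have hdiff : ∀ (w : Fin 2 → ℤ) (m n : ℤ), w 0 = v 0 + m → w 1 = v 1 + n →
          Qr r₁ r₂ r₃ (cv w 0 - (![(v 0:ℝ) + γ₀, (v 1:ℝ) + γ₁]) 0)
              (cv w 1 - (![(v 0:ℝ) + γ₀, (v 1:ℝ) + γ₁]) 1)
            - Qr r₁ r₂ r₃ (cv v 0 - (![(v 0:ℝ) + γ₀, (v 1:ℝ) + γ₁]) 0)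
              (cv v 1 - (![(v 0:ℝ) + γ₀, (v 1:ℝ) + γ₁]) 1)
          = Ff r₁ r₂ r₃ (-r₃+(r₁+r₃)/2) ((r₁+r₂+r₃)/2) (m:ℝ) (n:ℝ) := by
        intro w m n hw0 hw1
        have hd := key_diff r₁ r₂ r₃ (![(v 0:ℝ) + γ₀, (v 1:ℝ) + γ₁]) (cv v) (cv w) (m:ℝ) (n:ℝ)
          (by simp only [cv, hw0]; push_cast; ring) (by simp only [cv, hw1]; push_cast; ring)
        rw [hu, hv] at hd
        exact hd
      have hminv : ∀ b ∈ latticePts 2,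
          Qr r₁ r₂ r₃ (cv v 0 - (![(v 0:ℝ) + γ₀, (v 1:ℝ) + γ₁]) 0)
              (cv v 1 - (![(v 0:ℝ) + γ₀, (v 1:ℝ) + γ₁]) 1)
          ≤ Qr r₁ r₂ r₃ (b 0 - (![(v 0:ℝ) + γ₀, (v 1:ℝ) + γ₁]) 0)
              (b 1 - (![(v 0:ℝ) + γ₀, (v 1:ℝ) + γ₁]) 1) := by
        intro b hb
        obtain ⟨wb, rfl⟩ := lattice_iff.mp hb
        have hd := hdiff wb (wb 0 - v 0) (wb 1 - v 1) (by ring) (by ring)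
        have hn := rev2_nonneg r₁ r₂ r₃ h₁ h₂ h₃ (wb 0 - v 0) (wb 1 - v 1)
        linarith
      have hMeq : Mset r₁ r₂ r₃ ![(v 0:ℝ) + γ₀, (v 1:ℝ) + γ₁]
          = {cv v, cv (fun i => v i + ![0, 1] i), cv (fun i => v i + ![1, 1] i)} := by
        ext x
        constructor
        · rintro ⟨hlat, hmin⟩
          obtain ⟨w, rfl⟩ := lattice_iff.mp hlat
          have hd := hdiff w (w 0 - v 0) (w 1 - v 1) (by ring) (by ring)
          have h1 := hmin (cv v) (cv_mem v)
          have hn := rev2_nonneg r₁ r₂ r₃ h₁ h₂ h₃ (w 0 - v 0) (w 1 - v 1)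
          have hf0 : Ff r₁ r₂ r₃ (-r₃+(r₁+r₃)/2) ((r₁+r₂+r₃)/2)
              ((w 0 - v 0 : ℤ):ℝ) ((w 1 - v 1 : ℤ):ℝ) = 0 := by linarith
          simp only [Set.mem_insert_iff, Set.mem_singleton_iff]
          rcases rev2_zero_iff r₁ r₂ r₃ h₁ h₂ h₃ _ _ hf0 with ⟨e1,e2⟩|⟨e1,e2⟩|⟨e1,e2⟩
          · exact Or.inl (cv_eq_of _ _ (by omega) (by omega))
          · exact Or.inr (Or.inl (cv_eq_of _ _ (by simp; omega) (by simp; omega)))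
          · exact Or.inr (Or.inr (cv_eq_of _ _ (by simp; omega) (by simp; omega)))
        · intro hx
          simp only [Set.mem_insert_iff, Set.mem_singleton_iff] at hx
          rcases hx with rfl | rfl | rfl
          · exact ⟨cv_mem v, hminv⟩
          · refine ⟨cv_mem _, ?_⟩
            intro b hb
            have hd := hdiff (fun i => v i + ![0, 1] i) 0 1 (by simp) (by simp)
            have hf : Ff r₁ r₂ r₃ (-r₃+(r₁+r₃)/2) ((r₁+r₂+r₃)/2) ((0:ℤ):ℝ) ((1:ℤ):ℝ) = 0 := by
              rw [rev2_eq]; norm_num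
            have := hminv b hb
            linarith
          · refine ⟨cv_mem _, ?_⟩
            intro b hb
            have hd := hdiff (fun i => v i + ![1, 1] i) 1 1 (by simp) (by simp)
            have hf : Ff r₁ r₂ r₃ (-r₃+(r₁+r₃)/2) ((r₁+r₂+r₃)/2) ((1:ℤ):ℝ) ((1:ℤ):ℝ) = 0 := by
              rw [rev2_eq]; norm_num
            have := hminv b hb
            linarith
      constructor
      · refine ⟨![(v 0:ℝ) + γ₀, (v 1:ℝ) + γ₁], ?_⟩
        have hset : {a | a ∈ latticePts 2 ∧ ∀ b ∈ latticePts 2,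
            (a - ![(v 0:ℝ) + γ₀, (v 1:ℝ) + γ₁]) ⬝ᵥ
              ((r₁ • !![(1:ℝ), 0; 0, 1] + r₂ • !![(0:ℝ), 0; 0, 1]
                + r₃ • !![(1:ℝ), -1; -1, 1]).mulVec (a - ![(v 0:ℝ) + γ₀, (v 1:ℝ) + γ₁]))
            ≤ (b - ![(v 0:ℝ) + γ₀, (v 1:ℝ) + γ₁]) ⬝ᵥ
              ((r₁ • !![(1:ℝ), 0; 0, 1] + r₂ • !![(0:ℝ), 0; 0, 1]
                + r₃ • !![(1:ℝ), -1; -1, 1]).mulVec (b - ![(v 0:ℝ) + γ₀, (v 1:ℝ) + γ₁]))}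
            = Mset r₁ r₂ r₃ ![(v 0:ℝ) + γ₀, (v 1:ℝ) + γ₁] := by
          ext a
          simp only [Set.mem_setOf_eq, Mset, bmat_diag, Pi.sub_apply]
        rw [hσ, hset, hMeq, zTrans_hull, zTrans_triple]
        have f0 : cv v + (0 : Fin 2 → ℝ) = cv v := by simp
        have f1 : cv v + stdV 2 1 = cv (fun i => v i + ![0, 1] i) := by
          funext i; fin_cases i <;> simp [cv, stdV, Pi.single_apply] <;> push_cast <;> ring
        have f2 : cv v + (stdV 2 0 + stdV 2 1) = cv (fun i => v i + ![1, 1] i) := by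
          funext i; fin_cases i <;> simp [cv, stdV, Pi.single_apply] <;> push_cast <;> ring
        rw [f0, f1, f2]
      · apply span_triple_top σ (cv v)
        · rw [hσ]
          exact ⟨0, subset_convexHull ℝ _ (by simp), by funext i; simp [cv]⟩
        · rw [hσ]
          refine ⟨stdV 2 0 + stdV 2 1, subset_convexHull ℝ _ (by simp), by funext i; simp [cv]⟩
        · right
          rw [hσ]
          exact ⟨stdV 2 1, subset_convexHull ℝ _ (by simp), by funext i; simp [cv]⟩
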